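/- Let H₀, H₁, K₁ be complex Hilbert spaces, and let T₀ ∈ B(H₀), T₁ ∈ B(H₁), V₁ ∈ B(K₁), K ∈ B(H₁, K₁), A ∈ B(H₁, H₀). Define the block operators V on K₁ ⊕₂ H₁ by V(k, h) = (V₁k + Kh, T₁h), R on H₀ ⊕₂ H₁ by R(x, h) = (T₀x + Ah, T₁h), and R₀ on H₀ ⊕₂ K₁ ⊕₂ H₁ by R₀(x, k, h) = (T₀x + Ah, V₁k + Kh, T₁h). If V is polynomially bounded, then R is polynomially bounded if and only if R₀ is polynomially bounded. -/

import Mathlib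

noncomputable section

/-- An operator `T` is polynomially bounded if `‖p(T)‖ ≤ M · sup_{|z| ≤ 1} |p(z)|`
for some `M > 0` and all polynomials `p`. -/
def PolynomiallyBounded {H : Type*} [NormedAddCommGroup H] [NormedSpace ℂ H] (T : H →L[ℂ] H) : Prop :=
  ∃ M : ℝ, 0 < M ∧ ∀ p : Polynomial ℂ,
    ‖Polynomial.aeval T p‖ ≤ M * sSup ((fun z : ℂ => ‖p.eval z‖) '' {z : ℂ | ‖z‖ ≤ 1})

section Aux

lemma aux_le_of_sq_le_sq {a b : ℝ} (ha : 0 ≤ a) (hb : 0 ≤ b) (h : a ^ 2 ≤ b ^ 2) : a ≤ b := by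
  nlinarith

lemma wlp_fst_add {α β : Type*} [AddCommGroup α] [AddCommGroup β]
    (a b : WithLp 2 (α × β)) : (a + b).fst = a.fst + b.fst := rfl

lemma wlp_snd_add {α β : Type*} [AddCommGroup α] [AddCommGroup β]
    (a b : WithLp 2 (α × β)) : (a + b).snd = a.snd + b.snd := rfl

lemma wlp_fst_smul {α β : Type*} [AddCommGroup α] [AddCommGroup β]
    [Module ℂ α] [Module ℂ β] (c : ℂ) (a : WithLp 2 (α × β)) : (c • a).fst = c • a.fst := rfl

lemma wlp_snd_smul {α β : Type*} [AddCommGroup α] [AddCommGroup β]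
    [Module ℂ α] [Module ℂ β] (c : ℂ) (a : WithLp 2 (α × β)) : (c • a).snd = c • a.snd := rfl

lemma wlp_fst_norm_le {α β : Type*} [NormedAddCommGroup α] [NormedAddCommGroup β]
    (x : WithLp 2 (α × β)) : ‖x.fst‖ ≤ ‖x‖ := by
  have h := WithLp.prod_norm_sq_eq_of_L2 x
  have h2 := sq_nonneg ‖x.snd‖
  exact aux_le_of_sq_le_sq (norm_nonneg _) (norm_nonneg _) (by nlinarith)

lemma wlp_snd_norm_le {α β : Type*} [NormedAddCommGroup α] [NormedAddCommGroup β]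
    (x : WithLp 2 (α × β)) : ‖x.snd‖ ≤ ‖x‖ := by
  have h := WithLp.prod_norm_sq_eq_of_L2 x
  have h2 := sq_nonneg ‖x.fst‖
  exact aux_le_of_sq_le_sq (norm_nonneg _) (norm_nonneg _) (by nlinarith)

lemma wlp_ext2 {α β : Type*} (a b : WithLp 2 (α × β)) (h1 : a.fst = b.fst) (h2 : a.snd = b.snd) :
    a = b := by
  cases a; cases b; simp_all [WithLp.fst, WithLp.snd, Prod.ext_iff]

end Aux

set_option maxHeartbeats 1600000 in
/-- Proposition 2.5 (1), polynomially bounded case: with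
`V(k,h) = (V₁k + Kh, T₁h)`, `R(x,h) = (T₀x + Ah, T₁h)` and
`R₀(x,k,h) = (T₀x + Ah, V₁k + Kh, T₁h)`, if `V` is polynomially bounded then
`R` is polynomially bounded iff `R₀` is polynomially bounded. -/
theorem polynomiallyBounded_R_iff_R₀
    {H₀ H₁ K₁ : Type}
    [NormedAddCommGroup H₀] [InnerProductSpace ℂ H₀] [CompleteSpace H₀]
    [NormedAddCommGroup H₁] [InnerProductSpace ℂ H₁] [CompleteSpace H₁]
    [NormedAddCommGroup K₁] [InnerProductSpace ℂ K₁] [CompleteSpace K₁]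
    (T₀ : H₀ →L[ℂ] H₀) (T₁ : H₁ →L[ℂ] H₁) (V₁ : K₁ →L[ℂ] K₁)
    (K : H₁ →L[ℂ] K₁) (A : H₁ →L[ℂ] H₀)
    (V : WithLp 2 (K₁ × H₁) →L[ℂ] WithLp 2 (K₁ × H₁))
    (hV : ∀ (k : K₁) (h : H₁),
      V ((WithLp.equiv 2 (K₁ × H₁)).symm (k, h))
        = (WithLp.equiv 2 (K₁ × H₁)).symm (V₁ k + K h, T₁ h))
    (R : WithLp 2 (H₀ × H₁) →L[ℂ] WithLp 2 (H₀ × H₁))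
    (hR : ∀ (x : H₀) (h : H₁),
      R ((WithLp.equiv 2 (H₀ × H₁)).symm (x, h))
        = (WithLp.equiv 2 (H₀ × H₁)).symm (T₀ x + A h, T₁ h))
    (R₀ : WithLp 2 (H₀ × WithLp 2 (K₁ × H₁)) →L[ℂ] WithLp 2 (H₀ × WithLp 2 (K₁ × H₁)))
    (hR₀ : ∀ (x : H₀) (k : K₁) (h : H₁),
      R₀ ((WithLp.equiv 2 (H₀ × WithLp 2 (K₁ × H₁))).symm
            (x, (WithLp.equiv 2 (K₁ × H₁)).symm (k, h)))
        = (WithLp.equiv 2 (H₀ × WithLp 2 (K₁ × H₁))).symm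
            (T₀ x + A h, (WithLp.equiv 2 (K₁ × H₁)).symm (V₁ k + K h, T₁ h)))
    (hVpb : PolynomiallyBounded V) :
    PolynomiallyBounded R ↔ PolynomiallyBounded R₀ := by
  -- pointwise descriptions
  have hV' : ∀ u : WithLp 2 (K₁ × H₁),
      V u = (WithLp.toLp 2 (V₁ u.fst + K u.snd, T₁ u.snd) : WithLp 2 (K₁ × H₁)) := fun u => hV u.fst u.snd
  have hR' : ∀ w : WithLp 2 (H₀ × H₁),
      R w = (WithLp.toLp 2 (T₀ w.fst + A w.snd, T₁ w.snd) : WithLp 2 (H₀ × H₁)) := fun w => hR w.fst w.snd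
  have hR₀' : ∀ u : WithLp 2 (H₀ × WithLp 2 (K₁ × H₁)),
      R₀ u = (WithLp.toLp 2 (T₀ u.fst + A u.snd.snd,
        (WithLp.toLp 2 (V₁ u.snd.fst + K u.snd.snd, T₁ u.snd.snd) : WithLp 2 (K₁ × H₁))) :
          WithLp 2 (H₀ × WithLp 2 (K₁ × H₁))) := fun u => hR₀ u.fst u.snd.fst u.snd.snd
  -- powers
  have hApow : ∀ n : ℕ, ∀ w : WithLp 2 (H₀ × H₁), ((R ^ n) w).snd = (T₁ ^ n) w.snd := by
    intro n
    induction n with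
    | zero => intro w; rfl
    | succ n ih =>
      intro w
      have h2 : (R w).snd = T₁ w.snd := congrArg WithLp.snd (hR' w)
      rw [pow_succ, pow_succ, ContinuousLinearMap.mul_apply, ContinuousLinearMap.mul_apply,
        ih (R w), h2]
  have hBpow : ∀ n : ℕ, ∀ u : WithLp 2 (K₁ × H₁), ((V ^ n) u).snd = (T₁ ^ n) u.snd := by
    intro n
    induction n with
    | zero => intro u; rfl
    | succ n ih =>
      intro u
      have h2 : (V u).snd = T₁ u.snd := congrArg WithLp.snd (hV' u)
      rw [pow_succ, pow_succ, ContinuousLinearMap.mul_apply, ContinuousLinearMap.mul_apply,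
        ih (V u), h2]
  have hCpow : ∀ n : ℕ, ∀ u : WithLp 2 (H₀ × WithLp 2 (K₁ × H₁)),
      (R₀ ^ n) u = (WithLp.toLp 2 (((R ^ n) (WithLp.toLp 2 (u.fst, u.snd.snd) : WithLp 2 (H₀ × H₁))).fst, (V ^ n) u.snd) :
        WithLp 2 (H₀ × WithLp 2 (K₁ × H₁))) := by
    intro n
    induction n with
    | zero => intro u; rfl
    | succ n ih =>
      intro u
      rw [pow_succ, ContinuousLinearMap.mul_apply, ih (R₀ u), pow_succ, pow_succ,
        ContinuousLinearMap.mul_apply, ContinuousLinearMap.mul_apply,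
        hR₀' u, hR' (WithLp.toLp 2 (u.fst, u.snd.snd) : WithLp 2 (H₀ × H₁)), hV' u.snd]
      rfl
  -- polynomials
  have hApoly : ∀ p : Polynomial ℂ, ∀ w : WithLp 2 (H₀ × H₁),
      ((Polynomial.aeval R p) w).snd = (Polynomial.aeval T₁ p) w.snd := by
    intro p
    induction p using Polynomial.induction_on' with
    | add p q hp hq =>
      intro w
      simp only [map_add, ContinuousLinearMap.add_apply, wlp_snd_add, hp, hq]
    | monomial n a =>
      intro w
      simp only [Polynomial.aeval_monomial, Algebra.algebraMap_eq_smul_one,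
        smul_mul_assoc, one_mul, ContinuousLinearMap.smul_apply, wlp_snd_smul, hApow]
  have hBpoly : ∀ p : Polynomial ℂ, ∀ u : WithLp 2 (K₁ × H₁),
      ((Polynomial.aeval V p) u).snd = (Polynomial.aeval T₁ p) u.snd := by
    intro p
    induction p using Polynomial.induction_on' with
    | add p q hp hq =>
      intro u
      simp only [map_add, ContinuousLinearMap.add_apply, wlp_snd_add, hp, hq]
    | monomial n a =>
      intro u
      simp only [Polynomial.aeval_monomial, Algebra.algebraMap_eq_smul_one,
        smul_mul_assoc, one_mul, ContinuousLinearMap.smul_apply, wlp_snd_smul, hBpow]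
  have hCpoly : ∀ p : Polynomial ℂ, ∀ u : WithLp 2 (H₀ × WithLp 2 (K₁ × H₁)),
      (Polynomial.aeval R₀ p) u
        = (WithLp.toLp 2 (((Polynomial.aeval R p) (WithLp.toLp 2 (u.fst, u.snd.snd) : WithLp 2 (H₀ × H₁))).fst,
            (Polynomial.aeval V p) u.snd) : WithLp 2 (H₀ × WithLp 2 (K₁ × H₁))) := by
    intro p
    induction p using Polynomial.induction_on' with
    | add p q hp hq =>
      intro u
      refine wlp_ext2 _ _ ?_ ?_
      · simp only [map_add, ContinuousLinearMap.add_apply, wlp_fst_add, hp, hq]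
        rfl
      · simp only [map_add, ContinuousLinearMap.add_apply, wlp_snd_add, hp, hq]
        rfl
    | monomial n a =>
      intro u
      refine wlp_ext2 _ _ ?_ ?_
      · simp only [Polynomial.aeval_monomial, Algebra.algebraMap_eq_smul_one,
          smul_mul_assoc, one_mul, ContinuousLinearMap.smul_apply, wlp_fst_smul, hCpow]
        rfl
      · simp only [Polynomial.aeval_monomial, Algebra.algebraMap_eq_smul_one,
          smul_mul_assoc, one_mul, ContinuousLinearMap.smul_apply, wlp_snd_smul, hCpow]
        rfl
  constructor
  · -- R pb → R₀ pb
    rintro ⟨MR, hMR, hRb⟩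
    obtain ⟨MV, hMV, hVb⟩ := hVpb
    refine ⟨MR + MV, by positivity, fun p => ?_⟩
    have key : ‖Polynomial.aeval R₀ p‖ ≤ ‖Polynomial.aeval R p‖ + ‖Polynomial.aeval V p‖ := by
      refine ContinuousLinearMap.opNorm_le_bound _
        (by positivity) (fun u => ?_)
      set a := ‖Polynomial.aeval R p‖ with ha
      set b := ‖Polynomial.aeval V p‖ with hb
      have ha0 : 0 ≤ a := norm_nonneg _
      have hb0 : 0 ≤ b := norm_nonneg _
      set w : WithLp 2 (H₀ × H₁) := (WithLp.toLp 2 (u.fst, u.snd.snd) : WithLp 2 (H₀ × H₁)) with hw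
      have hwu : ‖w‖ ≤ ‖u‖ := by
        refine aux_le_of_sq_le_sq (norm_nonneg _) (norm_nonneg _) ?_
        have h1 : ‖w‖ ^ 2 = ‖u.fst‖ ^ 2 + ‖u.snd.snd‖ ^ 2 := WithLp.prod_norm_sq_eq_of_L2 w
        have h2 := WithLp.prod_norm_sq_eq_of_L2 u
        have h3 := WithLp.prod_norm_sq_eq_of_L2 u.snd
        have h4 := sq_nonneg ‖u.snd.fst‖
        nlinarith
      have hf : ‖((Polynomial.aeval R p) w).fst‖ ≤ a * ‖u‖ :=
        le_trans (wlp_fst_norm_le _)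
          (le_trans ((Polynomial.aeval R p).le_opNorm w)
            (by exact mul_le_mul_of_nonneg_left hwu ha0))
      have hg : ‖(Polynomial.aeval V p) u.snd‖ ≤ b * ‖u‖ :=
        le_trans ((Polynomial.aeval V p).le_opNorm u.snd)
          (mul_le_mul_of_nonneg_left (wlp_snd_norm_le u) hb0)
      have hsq : ‖(Polynomial.aeval R₀ p) u‖ ^ 2
          = ‖((Polynomial.aeval R p) w).fst‖ ^ 2 + ‖(Polynomial.aeval V p) u.snd‖ ^ 2 := by
        rw [hCpoly p u]
        exact WithLp.prod_norm_sq_eq_of_L2 _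
      refine aux_le_of_sq_le_sq (norm_nonneg _) (by positivity) ?_
      have hfn := norm_nonneg ((Polynomial.aeval R p) w).fst
      have hgn := norm_nonneg ((Polynomial.aeval V p) u.snd)
      have hun := norm_nonneg u
      nlinarith
    calc ‖Polynomial.aeval R₀ p‖
        ≤ ‖Polynomial.aeval R p‖ + ‖Polynomial.aeval V p‖ := key
      _ ≤ MR * sSup ((fun z : ℂ => ‖p.eval z‖) '' {z : ℂ | ‖z‖ ≤ 1})
          + MV * sSup ((fun z : ℂ => ‖p.eval z‖) '' {z : ℂ | ‖z‖ ≤ 1}) :=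
          add_le_add (hRb p) (hVb p)
      _ = (MR + MV) * sSup ((fun z : ℂ => ‖p.eval z‖) '' {z : ℂ | ‖z‖ ≤ 1}) := by ring
  · -- R₀ pb → R pb
    rintro ⟨M₀, hM₀, hRb⟩
    refine ⟨M₀, hM₀, fun p => ?_⟩
    have key : ‖Polynomial.aeval R p‖ ≤ ‖Polynomial.aeval R₀ p‖ := by
      refine ContinuousLinearMap.opNorm_le_bound _ (norm_nonneg _) (fun w => ?_)
      set u : WithLp 2 (H₀ × WithLp 2 (K₁ × H₁)) :=
        (WithLp.toLp 2 (w.fst, (WithLp.toLp 2 (0, w.snd) : WithLp 2 (K₁ × H₁))) : WithLp 2 (H₀ × WithLp 2 (K₁ × H₁))) with hu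
      have huw : ‖u‖ = ‖w‖ := by
        refine le_antisymm ?_ ?_ <;>
          refine aux_le_of_sq_le_sq (norm_nonneg _) (norm_nonneg _) ?_ <;>
          · have h1 : ‖u‖ ^ 2 = ‖w.fst‖ ^ 2 + ‖u.snd‖ ^ 2 := WithLp.prod_norm_sq_eq_of_L2 u
            have h2 := WithLp.prod_norm_sq_eq_of_L2 w
            have h3 : ‖u.snd‖ ^ 2 = ‖u.snd.fst‖ ^ 2 + ‖w.snd‖ ^ 2 := WithLp.prod_norm_sq_eq_of_L2 u.snd
            have h4 : ‖u.snd.fst‖ = 0 := by simp [hu]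
            nlinarith
      have hval : (Polynomial.aeval R₀ p) u
          = (WithLp.toLp 2 (((Polynomial.aeval R p) w).fst, (Polynomial.aeval V p) u.snd) :
              WithLp 2 (H₀ × WithLp 2 (K₁ × H₁))) := by
        have := hCpoly p u
        have hw2 : (WithLp.toLp 2 (u.fst, u.snd.snd) : WithLp 2 (H₀ × H₁)) = w := rfl
        rw [hw2] at this
        exact this
      have hRle : ‖(Polynomial.aeval R p) w‖ ≤ ‖(Polynomial.aeval R₀ p) u‖ := by
        refine aux_le_of_sq_le_sq (norm_nonneg _) (norm_nonneg _) ?_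
        have h1 := WithLp.prod_norm_sq_eq_of_L2 ((Polynomial.aeval R p) w)
        have h2 := WithLp.prod_norm_sq_eq_of_L2 ((Polynomial.aeval R₀ p) u)
        have h3 := WithLp.prod_norm_sq_eq_of_L2 ((Polynomial.aeval V p) u.snd)
        have h4 : ((Polynomial.aeval V p) u.snd).snd = ((Polynomial.aeval R p) w).snd := by
          rw [hBpoly p u.snd, hApoly p w]
          rfl
        have h5 : ((Polynomial.aeval R₀ p) u).fst = ((Polynomial.aeval R p) w).fst :=
          congrArg WithLp.fst hval
        have h6 : ((Polynomial.aeval R₀ p) u).snd = (Polynomial.aeval V p) u.snd :=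
          congrArg WithLp.snd hval
        have h7 := sq_nonneg ‖((Polynomial.aeval V p) u.snd).fst‖
        rw [h5, h6] at h2
        rw [h4] at h3
        nlinarith
      calc ‖(Polynomial.aeval R p) w‖ ≤ ‖(Polynomial.aeval R₀ p) u‖ := hRle
        _ ≤ ‖Polynomial.aeval R₀ p‖ * ‖u‖ := (Polynomial.aeval R₀ p).le_opNorm u
        _ = ‖Polynomial.aeval R₀ p‖ * ‖w‖ := by rw [huw]
    exact le_trans key (hRb p)
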